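/- Let n ≤ m and suppose (λ_{ij}) is an m×n nonnegative real matrix whose every row sums to 1/m and whose total sum is 1. Then the state ρ = ∑_{i=0}^{m−1} ∑_{j=0}^{n−1} λ_{ij} |ψ_{ij}⟩⟨ψ_{ij}| satisfies tr_B ρ = (1/n) I_n and tr_A ρ = (1/m) I_m, and rank ρ equals the number of nonzero entries of (λ_{ij}). -/

import Mathlib

open ComplexOrder

/-- `ω = e^{2πi/n}`, a primitive `n`-th root of unity. -/
noncomputable def omegaC (n : ℕ) : ℂ := Complex.exp (2 * Real.pi * Complex.I / n)

/-- The cyclic shift operator `X` on `ℂ^m`: `X |j⟩ = |j + 1 mod m⟩`. -/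
def shiftX (m : ℕ) [NeZero m] : Matrix (Fin m) (Fin m) ℂ :=
  fun i j => if i = j + 1 then 1 else 0

/-- The generalized clock operator `Z_n` on `ℂ^m`: `Z_n |i⟩ = ω^i |i⟩` with `ω = e^{2πi/n}`. -/
noncomputable def weylZ (n m : ℕ) : Matrix (Fin m) (Fin m) ℂ :=
  Matrix.diagonal fun i : Fin m => omegaC n ^ (i : ℕ)

/-- The maximally entangled state `|ψ₀₀⟩ = (1/√n) ∑_{s<n} |s⟩ ⊗ |s⟩` in `ℂ^n ⊗ ℂ^m`. -/
noncomputable def psi00 (n m : ℕ) : Fin n × Fin m → ℂ :=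
  fun p => if (p.1 : ℕ) = (p.2 : ℕ) then ((Real.sqrt n : ℝ)⁻¹ : ℂ) else 0

/-- Apply an operator `M` on `ℂ^m` to the second tensor factor of `ℂ^n ⊗ ℂ^m`. -/
noncomputable def applyB {n m : ℕ} (M : Matrix (Fin m) (Fin m) ℂ)
    (v : Fin n × Fin m → ℂ) : Fin n × Fin m → ℂ :=
  fun p => ∑ c : Fin m, M p.2 c * v (p.1, c)

/-- `|ψ_{ij}⟩ = (I_n ⊗ X^i Z_n^j) |ψ₀₀⟩`. -/
noncomputable def psiV (n m : ℕ) [NeZero m] (i : Fin m) (j : Fin n) :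
    Fin n × Fin m → ℂ :=
  applyB (shiftX m ^ (i : ℕ) * weylZ n m ^ (j : ℕ)) (psi00 n m)

/-- The rank-one projector `|v⟩⟨v|`. -/
noncomputable def proj {α : Type*} (v : α → ℂ) : Matrix α α ℂ :=
  fun p q => v p * star (v q)

/-- Partial trace over the second tensor factor. -/
noncomputable def trB {n m : ℕ} (ρ : Matrix (Fin n × Fin m) (Fin n × Fin m) ℂ) :
    Matrix (Fin n) (Fin n) ℂ :=
  fun a a' => ∑ b : Fin m, ρ (a, b) (a', b)

/-- Partial trace over the first tensor factor. -/
noncomputable def trA {n m : ℕ} (ρ : Matrix (Fin n × Fin m) (Fin n × Fin m) ℂ) :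
    Matrix (Fin m) (Fin m) ℂ :=
  fun b b' => ∑ a : Fin n, ρ (a, b) (a, b')

section Aux

open scoped Fin.NatCast Fin.CommRing

lemma omegaC_ne_zero (n : ℕ) : omegaC n ≠ 0 := Complex.exp_ne_zero _

lemma isPrimitiveRoot_omegaC (n : ℕ) [NeZero n] : IsPrimitiveRoot (omegaC n) n :=
  Complex.isPrimitiveRoot_exp n (NeZero.ne n)

lemma star_omegaC (n : ℕ) : star (omegaC n) = (omegaC n)⁻¹ := by
  have : (starRingEnd ℂ) (omegaC n) = (omegaC n)⁻¹ := by
    rw [omegaC, ← Complex.exp_conj, ← Complex.exp_neg]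
    congr 1
    simp [map_div₀, Complex.conj_I, map_ofNat]
    ring
  exact this

lemma star_omegaC_pow (n k : ℕ) : star (omegaC n ^ k) = (omegaC n ^ k)⁻¹ := by
  rw [star_pow, star_omegaC, inv_pow]

lemma star_omegaC_pow_mul_self (n k : ℕ) : star (omegaC n ^ k) * omegaC n ^ k = 1 := by
  rw [star_omegaC_pow]
  exact inv_mul_cancel₀ (pow_ne_zero _ (omegaC_ne_zero n))

lemma shiftX_pow (m : ℕ) [NeZero m] (k : ℕ) (b c : Fin m) :
    (shiftX m ^ k) b c = if b = c + (k : Fin m) then 1 else 0 := by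
  induction k generalizing b c with
  | zero => simp [Matrix.one_apply, eq_comm]
  | succ k ih =>
      rw [pow_succ, Matrix.mul_apply, Finset.sum_eq_single (c + 1)]
      · have h2 : c + 1 + (k : Fin m) = c + ((k + 1 : ℕ) : Fin m) := by
          push_cast; ring
        rw [ih]; simp [shiftX, h2]
      · intro d _ hd
        rw [shiftX]; simp [hd]
      · simp

lemma psiV_apply (n m : ℕ) [NeZero n] [NeZero m] (hnm : n ≤ m) (i : Fin m) (j : Fin n)
    (a : Fin n) (b : Fin m) :
    psiV n m i j (a, b) =
      if b = Fin.castLE hnm a + i then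
        omegaC n ^ ((a : ℕ) * (j : ℕ)) * ((Real.sqrt n : ℝ)⁻¹ : ℂ) else 0 := by
  have hdiag : weylZ n m ^ (j : ℕ)
      = Matrix.diagonal (fun c : Fin m => omegaC n ^ ((c : ℕ) * (j : ℕ))) := by
    rw [weylZ, Matrix.diagonal_pow]
    ext c d
    by_cases h : c = d <;> simp [Matrix.diagonal_apply, h, pow_mul]
  have hv : ((i : ℕ) : Fin m) = i := Fin.cast_val_eq_self i
  rw [psiV, applyB]
  rw [Finset.sum_eq_single (Fin.castLE hnm a)]
  · rw [hdiag, Matrix.mul_diagonal, shiftX_pow, hv, psi00]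
    simp only [Fin.coe_castLE]
    split_ifs <;> simp
  · intro c _ hc
    have hne : ¬((a : ℕ) = (c : ℕ)) := by
      intro h; exact hc (Fin.ext (by simp [← h]))
    simp [psi00, hne]
  · simp

lemma sqrt_inv_sq (n : ℕ) :
    ((Real.sqrt n : ℝ)⁻¹ : ℂ) * ((Real.sqrt n : ℝ)⁻¹ : ℂ) = (n : ℂ)⁻¹ := by
  rw [← mul_inv, ← Complex.ofReal_mul, Real.mul_self_sqrt (Nat.cast_nonneg n),
    Complex.ofReal_natCast]

lemma star_sqrt_inv (n : ℕ) :
    star ((Real.sqrt n : ℝ)⁻¹ : ℂ) = ((Real.sqrt n : ℝ)⁻¹ : ℂ) := by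
  rw [star_inv₀, Complex.star_def, Complex.conj_ofReal]

/-- Row sum (over `b`) of `ψ_{ij}(a,·) ψ_{ij}(a',·)*`. -/
lemma sum_b_psiV (n m : ℕ) [NeZero n] [NeZero m] (hnm : n ≤ m) (i : Fin m) (j : Fin n)
    (a a' : Fin n) :
    ∑ b : Fin m, psiV n m i j (a, b) * star (psiV n m i j (a', b)) =
      if a = a' then (n : ℂ)⁻¹ else 0 := by
  have key : ∀ k l : ℕ,
      (omegaC n ^ k * ((Real.sqrt n : ℝ)⁻¹ : ℂ)) *
        star (omegaC n ^ k * ((Real.sqrt n : ℝ)⁻¹ : ℂ)) = (n : ℂ)⁻¹ := by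
    intro k l
    rw [star_mul', star_sqrt_inv]
    calc (omegaC n ^ k * _) * (star (omegaC n ^ k) * _)
        = (star (omegaC n ^ k) * omegaC n ^ k) *
            (((Real.sqrt n : ℝ)⁻¹ : ℂ) * ((Real.sqrt n : ℝ)⁻¹ : ℂ)) := by ring
      _ = (n : ℂ)⁻¹ := by rw [star_omegaC_pow_mul_self, sqrt_inv_sq, one_mul]
  simp only [psiV_apply n m hnm]
  rw [Finset.sum_eq_single (Fin.castLE hnm a + i)]
  · rw [if_pos rfl]
    by_cases h : a = a'
    · subst h
      rw [if_pos rfl, if_pos rfl, key _ 0]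
    · have hc : ¬(Fin.castLE hnm a + i = Fin.castLE hnm a' + i) := by
        intro he
        exact h (Fin.castLE_injective hnm (add_right_cancel he))
      rw [if_neg hc, if_neg h, star_zero, mul_zero]
  · intro b _ hb
    rw [if_neg hb, zero_mul]
  · simp

/-- Column sum (over `a`) of `ψ_{ij}(·,b) ψ_{ij}(·,b')*`. -/
lemma sum_a_psiV (n m : ℕ) [NeZero n] [NeZero m] (hnm : n ≤ m) (i : Fin m) (j : Fin n)
    (b b' : Fin m) :
    ∑ a : Fin n, psiV n m i j (a, b) * star (psiV n m i j (a, b')) =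
      if b' = b ∧ ((b - i : Fin m) : ℕ) < n then (n : ℂ)⁻¹ else 0 := by
  have key : ∀ k : ℕ,
      (omegaC n ^ k * ((Real.sqrt n : ℝ)⁻¹ : ℂ)) *
        star (omegaC n ^ k * ((Real.sqrt n : ℝ)⁻¹ : ℂ)) = (n : ℂ)⁻¹ := by
    intro k
    rw [star_mul', star_sqrt_inv]
    calc (omegaC n ^ k * _) * (star (omegaC n ^ k) * _)
        = (star (omegaC n ^ k) * omegaC n ^ k) *
            (((Real.sqrt n : ℝ)⁻¹ : ℂ) * ((Real.sqrt n : ℝ)⁻¹ : ℂ)) := by ring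
      _ = (n : ℂ)⁻¹ := by rw [star_omegaC_pow_mul_self, sqrt_inv_sq, one_mul]
  simp only [psiV_apply n m hnm]
  by_cases hlt : ((b - i : Fin m) : ℕ) < n
  · set a0 : Fin n := ⟨((b - i : Fin m) : ℕ), hlt⟩ with ha0
    have hc0 : Fin.castLE hnm a0 = b - i := Fin.ext rfl
    have hb0 : b = Fin.castLE hnm a0 + i := by rw [hc0, sub_add_cancel]
    rw [Finset.sum_eq_single a0]
    · rw [if_pos hb0]
      by_cases hbb : b' = b
      · subst hbb
        rw [if_pos hb0, key, if_pos ⟨rfl, hlt⟩]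
      · have : ¬(b' = Fin.castLE hnm a0 + i) := by rw [← hb0]; exact hbb
        rw [if_neg this, star_zero, mul_zero, if_neg (by simp [hbb])]
    · intro a _ ha
      have : ¬(b = Fin.castLE hnm a + i) := by
        intro h
        apply ha
        apply Fin.ext
        have : Fin.castLE hnm a = b - i := by rw [h]; ring
        simpa [ha0] using congrArg Fin.val this
      rw [if_neg this, zero_mul]
    · simp
  · rw [Finset.sum_eq_zero, if_neg (by simp [hlt])]
    intro a _
    have : ¬(b = Fin.castLE hnm a + i) := by
      intro h
      apply hlt
      have : b - i = Fin.castLE hnm a := by rw [h]; ring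
      rw [this]
      exact a.isLt
    rw [if_neg this, zero_mul]

lemma card_shift (n m : ℕ) [NeZero m] (hnm : n ≤ m) (b i0 : Fin m) :
    (Finset.univ.filter fun i : Fin m => ((b - i : Fin m) : ℕ) < n).card = n := by
  have h1 : (Finset.univ.filter fun c : Fin m => (c : ℕ) < n).card = n := by
    have himg : Finset.univ.filter (fun c : Fin m => (c : ℕ) < n)
        = Finset.image (Fin.castLE hnm) Finset.univ := by
      ext c
      simp only [Finset.mem_filter, Finset.mem_univ, true_and, Finset.mem_image]
      constructor
      · intro hc; exact ⟨⟨(c : ℕ), hc⟩, Fin.ext rfl⟩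
      · rintro ⟨a, -, rfl⟩; exact a.isLt
    rw [himg, Finset.card_image_of_injective _ (Fin.castLE_injective hnm),
      Finset.card_univ, Fintype.card_fin]
  have himg : Finset.univ.filter (fun i : Fin m => ((b - i : Fin m) : ℕ) < n)
      = Finset.image (fun c => b - c) (Finset.univ.filter fun c : Fin m => (c : ℕ) < n) := by
    ext i
    simp only [Finset.mem_filter, Finset.mem_univ, true_and, Finset.mem_image]
    constructor
    · intro h; exact ⟨b - i, h, by ring⟩
    · rintro ⟨c, hc, rfl⟩
      simpa [sub_sub_cancel] using hc
  rw [himg, Finset.card_image_of_injective _ sub_right_injective, h1]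

lemma geom_orth (n : ℕ) [NeZero n] (j l : Fin n) :
    ∑ a : Fin n, ((omegaC n)⁻¹ ^ (j : ℕ) * omegaC n ^ (l : ℕ)) ^ (a : ℕ)
      = if j = l then (n : ℂ) else 0 := by
  set x : ℂ := (omegaC n)⁻¹ ^ (j : ℕ) * omegaC n ^ (l : ℕ) with hx
  rw [Fin.sum_univ_eq_sum_range (fun a => x ^ a) n]
  by_cases h : j = l
  · subst h
    have hx1 : x = 1 := by
      rw [hx, inv_pow, inv_mul_cancel₀ (pow_ne_zero _ (omegaC_ne_zero n))]
    simp [hx1]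
  · have hxn : x ^ n = 1 := by
      have hr : omegaC n ^ n = 1 := (isPrimitiveRoot_omegaC n).pow_eq_one
      have hxd : x = omegaC n ^ (l : ℕ) / omegaC n ^ (j : ℕ) := by
        rw [hx, inv_pow]; ring
      rw [hxd, div_pow, ← pow_mul, ← pow_mul, mul_comm (l : ℕ) n, mul_comm (j : ℕ) n,
        pow_mul, pow_mul, hr, one_pow, one_pow]
      simp
    have hx1 : x ≠ 1 := by
      intro hxe
      apply h
      have hp : omegaC n ^ (l : ℕ) = omegaC n ^ (j : ℕ) := by
        have hth := hxe
        rw [hx, inv_pow] at hth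
        field_simp at hth
        rwa [div_eq_one_iff_eq (pow_ne_zero _ (omegaC_ne_zero n))] at hth
      exact Fin.ext ((isPrimitiveRoot_omegaC n).pow_inj l.isLt j.isLt hp).symm
    rw [geom_sum_eq hx1, hxn]
    simp [h]

end Aux

open Matrix in
/-- let `(λ_{ij})` be an `m × n` nonnegative matrix with every row summing
to `1/m` (hence total sum `1`). Then `ρ = ∑_{i,j} λ_{ij} |ψ_{ij}⟩⟨ψ_{ij}|` has margins
`(1/n) I_n` and `(1/m) I_m`, and its rank equals the number of nonzero entries. -/
theorem weyl_construction_general (n m : ℕ) [NeZero n] [NeZero m] (hnm : n ≤ m)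
    (lam : Fin m → Fin n → ℝ) (hlam : ∀ i j, 0 ≤ lam i j)
    (hrow : ∀ i : Fin m, ∑ j, lam i j = (m : ℝ)⁻¹)
    (htot : ∑ i : Fin m, ∑ j : Fin n, lam i j = 1)
    (ρ : Matrix (Fin n × Fin m) (Fin n × Fin m) ℂ)
    (hρ : ρ = ∑ i : Fin m, ∑ j : Fin n, (lam i j : ℂ) • proj (psiV n m i j)) :
    trB ρ = ((n : ℂ))⁻¹ • (1 : Matrix (Fin n) (Fin n) ℂ) ∧
      trA ρ = ((m : ℂ))⁻¹ • (1 : Matrix (Fin m) (Fin m) ℂ) ∧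
      ρ.rank = (Finset.univ.filter fun q : Fin m × Fin n => lam q.1 q.2 ≠ 0).card := by
  have hE : ∀ p q, ρ p q = ∑ i : Fin m, ∑ j : Fin n,
      (lam i j : ℂ) * (psiV n m i j p * star (psiV n m i j q)) := by
    intro p q
    rw [hρ]
    simp [Matrix.sum_apply, proj, mul_assoc]
  have htotC : (∑ i : Fin m, ∑ j : Fin n, (lam i j : ℂ)) = 1 := by
    have := congrArg (fun x : ℝ => (x : ℂ)) htot
    push_cast at this
    simpa using this
  have hrowC : ∀ i : Fin m, (∑ j : Fin n, (lam i j : ℂ)) = (m : ℂ)⁻¹ := by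
    intro i
    have := congrArg (fun x : ℝ => (x : ℂ)) (hrow i)
    push_cast at this
    simpa using this
  constructor
  · -- trB
    ext a a'
    show (∑ b : Fin m, ρ (a, b) (a', b)) = _
    simp only [hE]
    rw [Finset.sum_comm]
    have hswap : ∀ i : Fin m,
        (∑ b : Fin m, ∑ j : Fin n,
          (lam i j : ℂ) * (psiV n m i j (a, b) * star (psiV n m i j (a', b))))
        = ∑ j : Fin n, (lam i j : ℂ) *
            ∑ b : Fin m, psiV n m i j (a, b) * star (psiV n m i j (a', b)) := by
      intro i
      rw [Finset.sum_comm]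
      exact Finset.sum_congr rfl fun j _ => (Finset.mul_sum _ _ _).symm
    simp only [hswap, sum_b_psiV n m hnm]
    by_cases h : a = a'
    · subst h
      simp only [eq_self_iff_true, if_true, Matrix.smul_apply, Matrix.one_apply_eq,
        smul_eq_mul, mul_one]
      rw [show (∑ i : Fin m, ∑ j : Fin n, (lam i j : ℂ) * (n : ℂ)⁻¹)
            = (∑ i : Fin m, ∑ j : Fin n, (lam i j : ℂ)) * (n : ℂ)⁻¹ from by
          rw [Finset.sum_mul]
          exact Finset.sum_congr rfl fun i _ => (Finset.sum_mul _ _ _).symm]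
      rw [htotC, one_mul]
    · simp only [h, if_false, mul_zero, Finset.sum_const_zero, Matrix.smul_apply,
        Matrix.one_apply_ne h, smul_eq_mul, mul_zero]
  constructor
  · -- trA
    ext b b'
    show (∑ a : Fin n, ρ (a, b) (a, b')) = _
    simp only [hE]
    rw [Finset.sum_comm]
    have hswap : ∀ i : Fin m,
        (∑ a : Fin n, ∑ j : Fin n,
          (lam i j : ℂ) * (psiV n m i j (a, b) * star (psiV n m i j (a, b'))))
        = ∑ j : Fin n, (lam i j : ℂ) *
            ∑ a : Fin n, psiV n m i j (a, b) * star (psiV n m i j (a, b')) := by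
      intro i
      rw [Finset.sum_comm]
      exact Finset.sum_congr rfl fun j _ => (Finset.mul_sum _ _ _).symm
    simp only [hswap, sum_a_psiV n m hnm]
    by_cases h : b' = b
    · subst h
      simp only [true_and]
      have hterm : ∀ i : Fin m,
          (∑ j : Fin n, (lam i j : ℂ) * if ((b' - i : Fin m) : ℕ) < n then (n : ℂ)⁻¹ else 0)
          = if ((b' - i : Fin m) : ℕ) < n then (m : ℂ)⁻¹ * (n : ℂ)⁻¹ else 0 := by
        intro i
        by_cases hc : ((b' - i : Fin m) : ℕ) < n
        · simp only [hc, if_true]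
          rw [← Finset.sum_mul, hrowC]
        · simp [hc]
      simp only [hterm]
      rw [Finset.sum_ite, Finset.sum_const_zero, add_zero, Finset.sum_const,
        card_shift n m hnm b' b']
      have hn : (n : ℂ) ≠ 0 := Nat.cast_ne_zero.mpr (NeZero.ne n)
      simp only [Matrix.smul_apply, Matrix.one_apply_eq, smul_eq_mul, mul_one, nsmul_eq_mul]
      rw [show (n : ℂ) * ((m : ℂ)⁻¹ * (n : ℂ)⁻¹) = ((n : ℂ) * (n : ℂ)⁻¹) * (m : ℂ)⁻¹ from by
        ring, mul_inv_cancel₀ hn, one_mul]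
    · simp only [h, false_and, if_false, mul_zero, Finset.sum_const_zero,
        Matrix.smul_apply, Matrix.one_apply_ne fun hbb => h hbb.symm, smul_eq_mul, mul_zero]
  · -- rank
    classical
    set V : Matrix (Fin n × Fin m) (Fin n × Fin m) ℂ :=
      Matrix.of fun p q => psiV n m q.2 q.1 p with hV
    set D : Matrix (Fin n × Fin m) (Fin n × Fin m) ℂ :=
      Matrix.diagonal fun q : Fin n × Fin m => (lam q.2 q.1 : ℂ) with hD
    have hfac : ρ = V * D * Vᴴ := by
      ext p q
      rw [hE]
      rw [Matrix.mul_apply]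
      simp only [Matrix.mul_diagonal, Matrix.conjTranspose_apply, hV, hD, Matrix.of_apply]
      rw [Fintype.sum_prod_type]
      rw [Finset.sum_comm]
      refine Finset.sum_congr rfl fun i _ => Finset.sum_congr rfl fun j _ => ?_
      ring
    have hVV : Vᴴ * V = 1 := by
      ext q q'
      rw [Matrix.mul_apply, Matrix.one_apply]
      simp only [Matrix.conjTranspose_apply, hV, Matrix.of_apply]
      obtain ⟨j, i⟩ := q
      obtain ⟨l, k⟩ := q'
      rw [Fintype.sum_prod_type]
      simp only [psiV_apply n m hnm]
      have hinner : ∀ a : Fin n,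
          (∑ b : Fin m,
            star (if b = Fin.castLE hnm a + i then
              omegaC n ^ ((a : ℕ) * (j : ℕ)) * ((Real.sqrt n : ℝ)⁻¹ : ℂ) else 0) *
            (if b = Fin.castLE hnm a + k then
              omegaC n ^ ((a : ℕ) * (l : ℕ)) * ((Real.sqrt n : ℝ)⁻¹ : ℂ) else 0))
          = if i = k then
              ((omegaC n)⁻¹ ^ (j : ℕ) * omegaC n ^ (l : ℕ)) ^ (a : ℕ) * (n : ℂ)⁻¹ else 0 := by
        intro a
        rw [Finset.sum_eq_single (Fin.castLE hnm a + i)]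
        · rw [if_pos rfl]
          by_cases hik : i = k
          · subst hik
            rw [if_pos rfl, if_pos rfl]
            rw [star_mul', star_sqrt_inv, star_omegaC_pow]
            rw [show (omegaC n ^ ((a : ℕ) * (j : ℕ)))⁻¹
                = ((omegaC n)⁻¹ ^ (j : ℕ)) ^ (a : ℕ) from by
              rw [← inv_pow, ← pow_mul, mul_comm (j : ℕ) (a : ℕ)]]
            rw [show omegaC n ^ ((a : ℕ) * (l : ℕ))
                = (omegaC n ^ (l : ℕ)) ^ (a : ℕ) from by
              rw [← pow_mul, mul_comm (l : ℕ) (a : ℕ)]]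
            rw [mul_pow]
            calc ((omegaC n)⁻¹ ^ (j:ℕ)) ^ (a:ℕ) * ((Real.sqrt n : ℝ)⁻¹ : ℂ) *
                  ((omegaC n ^ (l:ℕ)) ^ (a:ℕ) * ((Real.sqrt n : ℝ)⁻¹ : ℂ))
                = ((omegaC n)⁻¹ ^ (j:ℕ)) ^ (a:ℕ) * (omegaC n ^ (l:ℕ)) ^ (a:ℕ) *
                  (((Real.sqrt n : ℝ)⁻¹ : ℂ) * ((Real.sqrt n : ℝ)⁻¹ : ℂ)) := by ring
              _ = _ := by rw [sqrt_inv_sq]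
          · have : ¬(Fin.castLE hnm a + i = Fin.castLE hnm a + k) := by
              intro he; exact hik (add_left_cancel he)
            rw [if_neg this, mul_zero, if_neg hik]
        · intro b _ hb
          rw [if_neg hb, star_zero, zero_mul]
        · simp
      simp only [hinner]
      by_cases hik : i = k
      · subst hik
        simp only [eq_self_iff_true, if_true]
        rw [← Finset.sum_mul, geom_orth]
        by_cases hjl : j = l
        · subst hjl
          simp [Nat.cast_ne_zero.mpr (NeZero.ne n), mul_inv_cancel₀,
            Prod.ext_iff]
        · simp [hjl, Prod.ext_iff]
      · simp [hik, Prod.ext_iff]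
    have hdetV : IsUnit V.det := by
      apply IsUnit.of_mul_eq_one (Vᴴ.det)
      rw [mul_comm, ← Matrix.det_mul, hVV, Matrix.det_one]
    have hdetVH : IsUnit Vᴴ.det := by
      apply IsUnit.of_mul_eq_one (V.det)
      rw [← Matrix.det_mul, hVV, Matrix.det_one]
    rw [hfac, Matrix.rank_mul_eq_left_of_isUnit_det Vᴴ (V * D) hdetVH,
      Matrix.rank_mul_eq_right_of_isUnit_det V D hdetV, hD, Matrix.rank_diagonal]
    rw [Fintype.card_subtype]
    refine Finset.card_bij' (fun q _ => (q.2, q.1)) (fun q _ => (q.2, q.1)) ?_ ?_ ?_ ?_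
    · intro q hq
      simp only [Finset.mem_filter, Finset.mem_univ, true_and] at hq ⊢
      simpa [Complex.ofReal_ne_zero] using hq
    · intro q hq
      simp only [Finset.mem_filter, Finset.mem_univ, true_and] at hq ⊢
      simpa [Complex.ofReal_ne_zero] using hq
    · intros; rfl
    · intros; rfl
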